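/- For every ε ∈ (0, 0.1), the intersection of conv{(0,0,0),(1,0,0),(1,1,0),(-1/2,3,1/2)} with the half-space -x₁ + 10x₂ ≤ 61/2 - ε equals the convex hull of the six points (0,0,0), (1,0,0), (1,1,0), (-1/2 + ε/21, 3 - 2ε/21, 1/2 - ε/63), (-1/2 + 3ε/43, 3 - 4ε/43, 1/2 - ε/43), and (-1/2 + ε/61, 3 - 6ε/61, 1/2 - ε/61). -/

import Mathlib

lemma mem_quad {E : Type*} [AddCommGroup E] [Module ℝ E] {p q r s x : E}
    (hx : x ∈ convexHull ℝ ({p, q, r, s} : Set E)) :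
    ∃ a b c d : ℝ, 0 ≤ a ∧ 0 ≤ b ∧ 0 ≤ c ∧ 0 ≤ d ∧ a + b + c + d = 1 ∧
      x = a • p + b • q + c • r + d • s := by
  rw [← convexJoin_segments, mem_convexJoin] at hx
  obtain ⟨u, ⟨a', b', ha', hb', hab, hu⟩, v, ⟨c', d', hc', hd', hcd, hv⟩,
    e', f', he', hf', hef, hx⟩ := hx
  refine ⟨e' * a', e' * b', f' * c', f' * d', by positivity, by positivity, by positivity,
    by positivity, by nlinarith, ?_⟩
  rw [← hx, ← hu, ← hv]
  simp only [smul_add, smul_smul]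
  abel

lemma mem_hex {E : Type*} [AddCommGroup E] [Module ℝ E] {p1 p2 p3 p4 p5 p6 x : E}
    {w1 w2 w3 w4 w5 w6 : ℝ} (h1 : 0 ≤ w1) (h2 : 0 ≤ w2) (h3 : 0 ≤ w3) (h4 : 0 ≤ w4)
    (h5 : 0 ≤ w5) (h6 : 0 ≤ w6) (hs : w1 + w2 + w3 + w4 + w5 + w6 = 1)
    (hx : x = w1 • p1 + w2 • p2 + w3 • p3 + w4 • p4 + w5 • p5 + w6 • p6) :
    x ∈ convexHull ℝ ({p1, p2, p3, p4, p5, p6} : Set E) := by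
  have hconv := convex_convexHull ℝ ({p1, p2, p3, p4, p5, p6} : Set E)
  have m1 : p1 ∈ convexHull ℝ ({p1, p2, p3, p4, p5, p6} : Set E) :=
    subset_convexHull ℝ _ (by simp)
  have m2 : p2 ∈ convexHull ℝ ({p1, p2, p3, p4, p5, p6} : Set E) :=
    subset_convexHull ℝ _ (by simp)
  have m3 : p3 ∈ convexHull ℝ ({p1, p2, p3, p4, p5, p6} : Set E) :=
    subset_convexHull ℝ _ (by simp)
  have m4 : p4 ∈ convexHull ℝ ({p1, p2, p3, p4, p5, p6} : Set E) :=
    subset_convexHull ℝ _ (by simp)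
  have m5 : p5 ∈ convexHull ℝ ({p1, p2, p3, p4, p5, p6} : Set E) :=
    subset_convexHull ℝ _ (by simp)
  have m6 : p6 ∈ convexHull ℝ ({p1, p2, p3, p4, p5, p6} : Set E) :=
    subset_convexHull ℝ _ (by simp)
  have key := hconv.sum_mem (t := Finset.univ (α := Fin 6))
    (w := ![w1, w2, w3, w4, w5, w6]) (z := ![p1, p2, p3, p4, p5, p6])
    (fun i _ => by fin_cases i <;> simpa)
    (by rw [Fin.sum_univ_six]; simpa using hs)
    (fun i _ => by fin_cases i <;> simpa)
  rw [Fin.sum_univ_six] at key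
  simpa [show (![w1, w2, w3, w4, w5, w6] : Fin 6 → ℝ) 5 = w6 from rfl,
    show (![p1, p2, p3, p4, p5, p6] : Fin 6 → E) 5 = p6 from rfl, ← hx] using key

set_option maxHeartbeats 2000000 in
set_option maxRecDepth 8000 in
theorem stmt7 (ε : ℝ) (hε0 : 0 < ε) (hε1 : ε < 0.1) :
    convexHull ℝ ({![0,0,0], ![1,0,0], ![1,1,0], ![-(1/2), 3, 1/2]} : Set (Fin 3 → ℝ)) ∩
        {x : Fin 3 → ℝ | -(x 0) + 10 * x 1 ≤ 61/2 - ε} =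
      convexHull ℝ
        ({![0,0,0], ![1,0,0], ![1,1,0],
          ![-(1/2) + ε/21, 3 - 2*ε/21, 1/2 - ε/63],
          ![-(1/2) + 3*ε/43, 3 - 4*ε/43, 1/2 - ε/43],
          ![-(1/2) + ε/61, 3 - 6*ε/61, 1/2 - ε/61]} : Set (Fin 3 → ℝ)) := by
  have hε1' : ε < 1/10 := by norm_num at hε1 ⊢; linarith
  set A : Fin 3 → ℝ := ![0,0,0] with hA
  set B : Fin 3 → ℝ := ![1,0,0] with hB
  set C : Fin 3 → ℝ := ![1,1,0] with hC
  set D : Fin 3 → ℝ := ![-(1/2), 3, 1/2] with hD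
  set P4 : Fin 3 → ℝ := ![-(1/2) + ε/21, 3 - 2*ε/21, 1/2 - ε/63] with hP4
  set P5 : Fin 3 → ℝ := ![-(1/2) + 3*ε/43, 3 - 4*ε/43, 1/2 - ε/43] with hP5
  set P6 : Fin 3 → ℝ := ![-(1/2) + ε/61, 3 - 6*ε/61, 1/2 - ε/61] with hP6
  have hAm : A ∈ ({A, B, C, D} : Set (Fin 3 → ℝ)) := by simp
  have hBm : B ∈ ({A, B, C, D} : Set (Fin 3 → ℝ)) := by simp
  have hCm : C ∈ ({A, B, C, D} : Set (Fin 3 → ℝ)) := by simp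
  have hDm : D ∈ ({A, B, C, D} : Set (Fin 3 → ℝ)) := by simp
  have hhalf : Convex ℝ {x : Fin 3 → ℝ | -(x 0) + 10 * x 1 ≤ 61/2 - ε} := by
    have : IsLinearMap ℝ (fun x : Fin 3 → ℝ => -(x 0) + 10 * x 1) :=
      ⟨fun x y => by simp; ring, fun c x => by simp; ring⟩
    exact convex_halfSpace_le this _
  apply Set.Subset.antisymm
  · -- LHS ⊆ RHS
    rintro x ⟨hconv, hcut⟩
    obtain ⟨a, b, c, d, ha, hb, hc, hd, hsum, hxeq⟩ := mem_quad hconv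
    have hx0 : x 0 = b + c - d/2 := by
      rw [hxeq]; simp [hA, hB, hC, hD]; ring
    have hx1 : x 1 = c + 3*d := by
      rw [hxeq]; simp [hA, hB, hC, hD]; ring
    rw [Set.mem_setOf_eq, hx0, hx1] at hcut
    set S : ℝ := a*(61/2-ε) + b*(63/2-ε) + c*(43/2-ε) with hSdef
    have h1 : 0 ≤ a*(61/2-ε) := mul_nonneg ha (by linarith)
    have h2 : 0 ≤ b*(63/2-ε) := mul_nonneg hb (by linarith)
    have h3 : 0 ≤ c*(43/2-ε) := mul_nonneg hc (by linarith)
    have hεsum : (a+b+c+d)*ε = ε := by rw [hsum]; ring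
    have hSd : d*ε ≤ S := by rw [hSdef]; linarith [hεsum, hcut]
    have hSpos : 0 < S := by
      rw [hSdef]
      rw [hSdef] at hSd
      by_contra hcon
      push_neg at hcon
      have habc : a + b + c ≤ 0 := by
        linarith [mul_nonneg ha (show (0:ℝ) ≤ 61/2 - ε - 21 by linarith),
          mul_nonneg hb (show (0:ℝ) ≤ 63/2 - ε - 21 by linarith),
          mul_nonneg hc (show (0:ℝ) ≤ 43/2 - ε - 21 by linarith)]
      have hd1 : 1 ≤ d := by linarith
      linarith [mul_nonneg (show (0:ℝ) ≤ d - 1 by linarith) hε0.le]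
    have hSne : S ≠ 0 := ne_of_gt hSpos
    have hSdε : 0 ≤ S - d*ε := by linarith
    refine mem_hex (w1 := a*(S-d*ε)/S) (w2 := b*(S-d*ε)/S) (w3 := c*(S-d*ε)/S)
      (w4 := d*b*(63/2)/S) (w5 := d*c*(43/2)/S) (w6 := d*a*(61/2)/S)
      (div_nonneg (mul_nonneg ha hSdε) hSpos.le)
      (div_nonneg (mul_nonneg hb hSdε) hSpos.le)
      (div_nonneg (mul_nonneg hc hSdε) hSpos.le)
      (div_nonneg (by positivity) hSpos.le)
      (div_nonneg (by positivity) hSpos.le)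
      (div_nonneg (by positivity) hSpos.le)
      ?_ ?_
    · have hnum : a*(S-d*ε) + b*(S-d*ε) + c*(S-d*ε) + d*b*(63/2) + d*c*(43/2) + d*a*(61/2)
          = S := by
        rw [hSdef]
        linear_combination (a*(61/2-ε) + b*(63/2-ε) + c*(43/2-ε)) * hsum
      rw [← add_div, ← add_div, ← add_div, ← add_div,
        ← add_div, hnum, div_self hSne]
    · have hkey : (a*(S-d*ε)) • A + (b*(S-d*ε)) • B + (c*(S-d*ε)) • C
          + (d*b*(63/2)) • P4 + (d*c*(43/2)) • P5 + (d*a*(61/2)) • P6 = S • x := by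
        rw [hxeq]
        funext i
        fin_cases i <;>
          · simp [hA, hB, hC, hD, hP4, hP5, hP6]
            rw [hSdef]
            ring
      have h2 : (a*(S-d*ε)/S) • A + (b*(S-d*ε)/S) • B + (c*(S-d*ε)/S) • C
          + (d*b*(63/2)/S) • P4 + (d*c*(43/2)/S) • P5 + (d*a*(61/2)/S) • P6
          = S⁻¹ • ((a*(S-d*ε)) • A + (b*(S-d*ε)) • B + (c*(S-d*ε)) • C
            + (d*b*(63/2)) • P4 + (d*c*(43/2)) • P5 + (d*a*(61/2)) • P6) := by
        simp only [smul_add, smul_smul, div_eq_inv_mul]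
      rw [h2, hkey, smul_smul, inv_mul_cancel₀ hSne, one_smul]
  · -- RHS ⊆ LHS
    apply convexHull_min _ ((convex_convexHull ℝ _).inter hhalf)
    rintro p hp
    have hP4seg : P4 ∈ segment ℝ D B := by
      refine ⟨1 - 2*ε/63, 2*ε/63, by linarith, by positivity, by ring, ?_⟩
      funext i
      fin_cases i <;> simp [hD, hB, hP4] <;> ring
    have hP5seg : P5 ∈ segment ℝ D C := by
      refine ⟨1 - 2*ε/43, 2*ε/43, by linarith, by positivity, by ring, ?_⟩
      funext i
      fin_cases i <;> simp [hD, hC, hP5] <;> ring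
    have hP6seg : P6 ∈ segment ℝ D A := by
      refine ⟨1 - 2*ε/61, 2*ε/61, by linarith, by positivity, by ring, ?_⟩
      funext i
      fin_cases i <;> simp [hD, hA, hP6] <;> ring
    simp only [Set.mem_insert_iff, Set.mem_singleton_iff] at hp
    rcases hp with rfl | rfl | rfl | rfl | rfl | rfl
    · exact ⟨subset_convexHull ℝ _ hAm, by simp [hA]; linarith⟩
    · exact ⟨subset_convexHull ℝ _ hBm, by simp [hB]; linarith⟩
    · exact ⟨subset_convexHull ℝ _ hCm, by simp [hC]; linarith⟩
    · exact ⟨segment_subset_convexHull hDm hBm hP4seg, by simp [hP4]; linarith⟩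
    · exact ⟨segment_subset_convexHull hDm hCm hP5seg, by simp [hP5]; linarith⟩
    · exact ⟨segment_subset_convexHull hDm hAm hP6seg, by simp [hP6]; linarith⟩
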